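/- For the SI system S' = λ(t) - μS - βSI, I' = βSI - cI with nonnegative solutions and λ(t) ≥ Λℓ > 0, λ(t) ≤ Λu: for every δ > 0, liminf_{t→∞} S(t) ≥ Λℓ / (μ + β(Λu/μ + δ)). In particular susceptible prey persist with asymptotic lower bound Λℓ / (μ + β Λu/μ). -/

import Mathlib

open Real Filter Set Topology

lemma comp_le (a b t0 : ℝ) (hb : 0 < b) (y v : ℝ → ℝ)
    (hy : ∀ t, t0 ≤ t → HasDerivAt y (v t) t)
    (hle : ∀ t, t0 ≤ t → v t ≤ a - b * y t) :
    ∀ t, t0 ≤ t → y t ≤ a / b + (y t0 - a / b) * Real.exp (-(b * (t - t0)))  := by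
  set g : ℝ → ℝ := fun t => (y t - a / b) * Real.exp (b * t) with hgdef
  have hba : b * (a / b) = a := mul_div_cancel₀ a (ne_of_gt hb)
  have hg : ∀ t, t0 ≤ t →
      HasDerivAt g ((v t + b * (y t - a / b)) * Real.exp (b * t)) t := by
    intro t ht
    have h1 : HasDerivAt (fun t => y t - a / b) (v t) t := (hy t ht).sub_const _
    have h2 : HasDerivAt (fun t => Real.exp (b * t)) (Real.exp (b * t) * b) t :=
      (Real.hasDerivAt_exp (b * t)).comp t (by simpa using (hasDerivAt_id t).const_mul b)
    have := h1.mul h2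
    exact this.congr_deriv (by ring)
  have hanti : AntitoneOn g (Ici t0) := by
    apply antitoneOn_of_deriv_nonpos (convex_Ici t0)
    · intro t ht
      exact ((hg t ht).differentiableAt).continuousAt.continuousWithinAt
    · intro t ht
      rw [interior_Ici] at ht
      exact ((hg t (le_of_lt ht)).differentiableAt).differentiableWithinAt
    · intro t ht
      rw [interior_Ici] at ht
      rw [(hg t (le_of_lt ht)).deriv]
      have h1 := hle t (le_of_lt ht)
      have key : v t + b * (y t - a / b) ≤ 0 := by
        have : b * (y t - a / b) = b * y t - a := by rw [mul_sub, hba]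
        linarith
      exact mul_nonpos_of_nonpos_of_nonneg key (Real.exp_pos _).le
  intro t ht
  have hgle : g t ≤ g t0 := hanti (le_refl t0 : t0 ∈ Ici t0) ht ht
  simp only [hgdef] at hgle
  have hexp : Real.exp (-(b * (t - t0))) * Real.exp (b * t) = Real.exp (b * t0) := by
    rw [← Real.exp_add]; ring_nf
  have h4 : (y t - a / b) * Real.exp (b * t)
      ≤ (y t0 - a / b) * Real.exp (-(b * (t - t0))) * Real.exp (b * t) := by
    rw [mul_assoc, hexp]; exact hgle
  have h5 := le_of_mul_le_mul_right h4 (Real.exp_pos (b * t))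
  linarith

lemma comp_ge (a b t0 : ℝ) (hb : 0 < b) (y v : ℝ → ℝ)
    (hy : ∀ t, t0 ≤ t → HasDerivAt y (v t) t)
    (hle : ∀ t, t0 ≤ t → a - b * y t ≤ v t) :
    ∀ t, t0 ≤ t → a / b + (y t0 - a / b) * Real.exp (-(b * (t - t0))) ≤ y t := by
  have H := comp_le (-a) b t0 hb (fun t => -(y t)) (fun t => -(v t))
    (fun t ht => (hy t ht).neg)
    (fun t ht => by have h := hle t ht; simp only [mul_neg]; linarith)
  intro t ht
  have h := H t ht
  simp only [neg_div] at h
  ring_nf at h ⊢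
  linarith

lemma exp_term_tendsto (b C t0 : ℝ) (hb : 0 < b) :
    Tendsto (fun t => C * Real.exp (-(b * (t - t0)))) atTop (𝓝 0) := by
  have h0 : Tendsto (fun t : ℝ => b * (t - t0)) atTop atTop := by
    have := tendsto_atTop_add_const_right atTop (-t0) (tendsto_id (α := ℝ))
    exact Tendsto.const_mul_atTop hb (by simpa [sub_eq_add_neg] using this)
  have h1 : Tendsto (fun t : ℝ => -(b * (t - t0))) atTop atBot :=
    tendsto_neg_atTop_atBot.comp h0
  have h2 := Real.tendsto_exp_atBot.comp h1
  simpa using h2.const_mul C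

theorem stmt14 (μ β c Λℓ Λu : ℝ) (l S I : ℝ → ℝ)
    (hμ : 0 < μ) (hβ : 0 < β) (hc : 0 < c) (hμc : μ < c)
    (hΛℓ : 0 < Λℓ) (hΛ : Λℓ ≤ Λu)
    (hl : Continuous l) (hlb : ∀ t, Λℓ ≤ l t ∧ l t ≤ Λu)
    (hpos : ∀ t, 0 ≤ t → 0 ≤ S t ∧ 0 ≤ I t)
    (hS : ∀ t, 0 ≤ t → HasDerivAt S (l t - μ * S t - β * S t * I t) t)
    (hI : ∀ t, 0 ≤ t → HasDerivAt I (β * S t * I t - c * I t) t) :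
    (∀ δ : ℝ, 0 < δ → Λℓ / (μ + β * (Λu / μ + δ)) ≤ liminf S atTop) ∧
    Λℓ / (μ + β * (Λu / μ)) ≤ liminf S atTop := by
  have hΛu : 0 < Λu := lt_of_lt_of_le hΛℓ hΛ
  have main : ∀ δ : ℝ, 0 < δ → Λℓ / (μ + β * (Λu / μ + δ)) ≤ liminf S atTop := by
    intro δ hδ
    set M : ℝ := Λu / μ + δ with hMdef
    set K : ℝ := μ + β * M with hKdef
    have hM : 0 < M := add_pos (div_pos hΛu hμ) hδ
    have hK : 0 < K := add_pos hμ (mul_pos hβ hM)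
    -- bound on N = S + I
    set N : ℝ → ℝ := fun t => S t + I t with hNdef
    have hN : ∀ t, 0 ≤ t → HasDerivAt N (l t - μ * S t - c * I t) t := by
      intro t ht
      have := (hS t ht).add (hI t ht)
      exact this.congr_deriv (by ring)
    have hNle : ∀ t, 0 ≤ t → l t - μ * S t - c * I t ≤ Λu - μ * N t := by
      intro t ht
      have h1 := (hlb t).2
      have h2 := (hpos t ht).2
      have h3 : μ * I t ≤ c * I t := mul_le_mul_of_nonneg_right hμc.le h2
      have h4 : μ * N t = μ * S t + μ * I t := by simp only [hNdef]; ring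
      linarith
    have hNb := comp_le Λu μ 0 hμ N _ hN hNle
    -- eventually I ≤ M
    have htend := exp_term_tendsto μ (N 0 - Λu / μ) 0 hμ
    have hev : ∀ᶠ t in atTop, I t ≤ M ∧ S t ≤ M := by
      filter_upwards [htend.eventually_lt_const hδ, eventually_ge_atTop (0 : ℝ)]
        with t h1t h0t
      have hb := hNb t h0t
      have hS0 := (hpos t h0t).1
      have hI0 := (hpos t h0t).2
      have hIN : I t ≤ N t := by simp only [hNdef]; linarith
      have hSN : S t ≤ N t := by simp only [hNdef]; linarith
      rw [hMdef]
      constructor <;> linarith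
    obtain ⟨T0, hT0⟩ := eventually_atTop.mp hev
    set T : ℝ := max T0 0 with hTdef
    have hSv : ∀ t, T ≤ t → HasDerivAt S (l t - μ * S t - β * S t * I t) t :=
      fun t ht => hS t (le_trans (le_max_right _ _) ht)
    have hSge : ∀ t, T ≤ t → Λℓ - K * S t ≤ l t - μ * S t - β * S t * I t := by
      intro t ht
      have h0t : (0 : ℝ) ≤ t := le_trans (le_max_right _ _) ht
      have hIl : I t ≤ M := (hT0 t (le_trans (le_max_left _ _) ht)).1
      have hS0 := (hpos t h0t).1
      have h1 := (hlb t).1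
      have h5 : β * S t * I t ≤ β * S t * M :=
        mul_le_mul_of_nonneg_left hIl (mul_nonneg hβ.le hS0)
      have hKs : K * S t = μ * S t + β * S t * M := by rw [hKdef]; ring
      linarith
    have hSb := comp_ge Λℓ K T hK S _ hSv hSge
    -- pass to liminf
    set g : ℝ → ℝ := fun t => Λℓ / K + (S T - Λℓ / K) * Real.exp (-(K * (t - T)))
      with hgdef
    have htend2 : Tendsto g atTop (𝓝 (Λℓ / K)) := by
      have := (exp_term_tendsto K (S T - Λℓ / K) T hK).const_add (Λℓ / K)
      simpa using this
    have hevle : g ≤ᶠ[atTop] S := eventually_atTop.mpr ⟨T, hSb⟩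
    have hbddg : atTop.IsBoundedUnder (· ≥ ·) g := htend2.isBoundedUnder_ge
    have hcobS : atTop.IsCoboundedUnder (· ≥ ·) S := by
      apply IsBoundedUnder.isCoboundedUnder_ge
      apply isBoundedUnder_of_eventually_le (a := M)
      exact hev.mono fun t ht => ht.2
    calc Λℓ / (μ + β * (Λu / μ + δ)) = Λℓ / K := by rw [hKdef, hMdef]
      _ = liminf g atTop := htend2.liminf_eq.symm
      _ ≤ liminf S atTop := liminf_le_liminf hevle hbddg hcobS
  refine ⟨main, ?_⟩
  have hden : (0 : ℝ) < μ + β * (Λu / μ) := by positivity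
  have hcont : Tendsto (fun δ : ℝ => Λℓ / (μ + β * (Λu / μ + δ))) (𝓝[>] 0)
      (𝓝 (Λℓ / (μ + β * (Λu / μ)))) := by
    have hc : ContinuousAt (fun δ : ℝ => Λℓ / (μ + β * (Λu / μ + δ))) 0 := by
      apply ContinuousAt.div continuousAt_const (by fun_prop)
      show μ + β * (Λu / μ + 0) ≠ 0
      rw [add_zero]
      positivity
    have h2 := hc.tendsto.mono_left (nhdsWithin_le_nhds (s := Set.Ioi (0:ℝ)))
    simpa using h2
  exact le_of_tendsto hcont (eventually_nhdsWithin_of_forall fun δ hδ => main δ hδ)
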